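/- If a graph G contains a subgraph isomorphic to T1, to T2, or to a cycle C_k with k ≥ 4, then G has no degree complete labeling: for every bijective labeling of V(G), the labeled graph contains a forbidden configuration H1 or H2. -/

import Mathlib

/-- The spider `T1 = S(2,2,2)`. -/
def spiderT1 : SimpleGraph (Fin 7) :=
  SimpleGraph.fromEdgeSet {s(0, 1), s(0, 2), s(0, 3), s(1, 4), s(2, 5), s(3, 6)}

/-- The net graph `T2`: a triangle with a pendant leaf at each vertex. -/
def netT2 : SimpleGraph (Fin 6) :=
  SimpleGraph.fromEdgeSet {s(0, 1), s(1, 2), s(0, 2), s(0, 3), s(1, 4), s(2, 5)}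

/-- `G` contains a subgraph isomorphic to `H`. -/
def ContainsSub {α β : Type*} (H : SimpleGraph α) (G : SimpleGraph β) : Prop :=
  ∃ f : α → β, Function.Injective f ∧ ∀ u v, H.Adj u v → G.Adj (f u) (f v)

/-- The labeling `f` of `G` yields a forbidden configuration `H1` or `H2`. -/
def HasForbidden {V : Type*} {n : ℕ} (G : SimpleGraph V) (f : V ≃ Fin n) : Prop :=
  ∃ v1 v2 v3 v4 : V, f v1 < f v2 ∧ f v2 < f v3 ∧ f v3 < f v4 ∧
    ((G.Adj v1 v3 ∧ G.Adj v2 v4) ∨ (G.Adj v1 v4 ∧ G.Adj v2 v3))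

section Aux

variable {V : Type*} {n : ℕ} {G : SimpleGraph V} (f : V ≃ Fin n)

/-- Key lemma: edge `{a,b}` with `c` strictly inside, `d` adjacent to `c`,
`d` distinct from `a,b` gives a forbidden configuration. -/
lemma dc_key {a b c d : V} (hab : G.Adj a b) (hcd : G.Adj c d)
    (h1 : f a < f c) (h2 : f c < f b) (hda : f d ≠ f a) (hdb : f d ≠ f b) :
    HasForbidden G f := by
  have hdc : f d ≠ f c := fun h => hcd.ne' (f.injective h)
  rcases lt_trichotomy (f d) (f a) with h | h | h
  · exact ⟨d, a, c, b, h, h1, h2, Or.inl ⟨hcd.symm, hab⟩⟩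
  · exact absurd h hda
  rcases lt_trichotomy (f d) (f c) with h' | h' | h'
  · exact ⟨a, d, c, b, h, h', h2, Or.inr ⟨hab, hcd.symm⟩⟩
  · exact absurd h' hdc
  rcases lt_trichotomy (f d) (f b) with h'' | h'' | h''
  · exact ⟨a, c, d, b, h1, h', h'', Or.inr ⟨hab, hcd⟩⟩
  · exact absurd h'' hdb
  · exact ⟨a, c, b, d, h1, h2, h'', Or.inl ⟨hab, hcd⟩⟩

lemma dc_key2aux {a b c d : V} (hab : G.Adj a b) (hcd : G.Adj c d)
    (h2 : f c < f d) (h3 : f a < f c) (hbc : f b ≠ f c) (hbd : f b ≠ f d)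
    (hnsep : ¬(f a < f c ∧ f a < f d ∧ f b < f c ∧ f b < f d)) :
    HasForbidden G f := by
  have hcb : f c < f b := by
    rcases hbc.lt_or_gt with h | h
    · exact absurd ⟨h3, h3.trans h2, h, h.trans h2⟩ hnsep
    · exact h
  exact dc_key f hab hcd h3 hcb (h3.trans h2).ne' hbd.symm

/-- Two disjoint edges that are not "separated" give a forbidden configuration. -/
lemma dc_key2 {a b c d : V} (hab : G.Adj a b) (hcd : G.Adj c d)
    (hac : f a ≠ f c) (had : f a ≠ f d) (hbc : f b ≠ f c) (hbd : f b ≠ f d)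
    (hns1 : ¬(f a < f c ∧ f a < f d ∧ f b < f c ∧ f b < f d))
    (hns2 : ¬(f c < f a ∧ f c < f b ∧ f d < f a ∧ f d < f b)) :
    HasForbidden G f := by
  have hab' : f a ≠ f b := fun h => hab.ne (f.injective h)
  have hcd' : f c ≠ f d := fun h => hcd.ne (f.injective h)
  rcases hab'.lt_or_gt with hab1 | hab1 <;> rcases hcd'.lt_or_gt with hcd1 | hcd1
  · rcases hac.lt_or_gt with h | h
    · exact dc_key2aux f hab hcd hcd1 h hbc hbd hns1
    · exact dc_key2aux f hcd hab hab1 h had.symm hbd.symm hns2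
  · rcases had.lt_or_gt with h | h
    · exact dc_key2aux f hab hcd.symm hcd1 h hbd hbc
        (fun ⟨p, q, r, s⟩ => hns1 ⟨q, p, s, r⟩)
    · exact dc_key2aux f hcd.symm hab hab1 h hac.symm hbc.symm
        (fun ⟨p, q, r, s⟩ => hns2 ⟨r, s, p, q⟩)
  · rcases hbc.lt_or_gt with h | h
    · exact dc_key2aux f hab.symm hcd hcd1 h hac had
        (fun ⟨p, q, r, s⟩ => hns1 ⟨r, s, p, q⟩)
    · exact dc_key2aux f hcd hab.symm hab1 h hbd.symm had.symm
        (fun ⟨p, q, r, s⟩ => hns2 ⟨q, p, s, r⟩)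
  · rcases hbd.lt_or_gt with h | h
    · exact dc_key2aux f hab.symm hcd.symm hcd1 h had hac
        (fun ⟨p, q, r, s⟩ => hns1 ⟨s, r, q, p⟩)
    · exact dc_key2aux f hcd.symm hab.symm hab1 h hbc.symm hac.symm
        (fun ⟨p, q, r, s⟩ => hns2 ⟨s, r, q, p⟩)

/-- For two vertex-disjoint edges: either one is entirely below the other (in labels),
or there is a forbidden configuration. -/
lemma dc_legpair {x1 y1 x2 y2 : V} (e1 : G.Adj x1 y1) (e2 : G.Adj x2 y2)
    (d1 : f x1 ≠ f x2) (d2 : f x1 ≠ f y2) (d3 : f y1 ≠ f x2) (d4 : f y1 ≠ f y2) :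
    (f x1 < f x2 ∧ f x1 < f y2 ∧ f y1 < f x2 ∧ f y1 < f y2) ∨
    (f x2 < f x1 ∧ f x2 < f y1 ∧ f y2 < f x1 ∧ f y2 < f y1) ∨
    HasForbidden G f := by
  by_cases s1 : f x1 < f x2 ∧ f x1 < f y2 ∧ f y1 < f x2 ∧ f y1 < f y2
  · exact Or.inl s1
  by_cases s2 : f x2 < f x1 ∧ f x2 < f y1 ∧ f y2 < f x1 ∧ f y2 < f y1
  · exact Or.inr (Or.inl s2)
  exact Or.inr (Or.inr (dc_key2 f e1 e2 d1 d2 d3 d4 s1 s2))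

/-- The spider configuration: middle leg `{x,y}`, center `z` adjacent to `x`,
a vertex `p` adjacent to `z` with label below both of `x, y`, and a vertex `q`
adjacent to `z` with label above both. -/
lemma dc_spider_aux {x y z p q : V} (exy : G.Adj x y) (ezx : G.Adj z x)
    (ezp : G.Adj z p) (ezq : G.Adj z q)
    (hpx : f p < f x) (hpy : f p < f y) (hxq : f x < f q) (hyq : f y < f q)
    (hzy : f z ≠ f y) : HasForbidden G f := by
  have hzx : f z ≠ f x := fun h => ezx.ne (f.injective h)
  rcases hzx.lt_or_gt with h1 | h1
  · rcases hzy.lt_or_gt with h2 | h2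
    · -- z below both x and y : use edge {z, q} with x inside
      exact dc_key f ezq exy h1 hxq h2.ne' hyq.ne
    · -- y < z < x : z inside the middle edge from y to x
      exact dc_key f exy.symm ezp h2 h1 hpy.ne hpx.ne
  · rcases hzy.lt_or_gt with h2 | h2
    · -- x < z < y : z inside the middle edge from x to y
      exact dc_key f exy ezp h1 h2 hpx.ne hpy.ne
    · -- z above both x and y : use edge {p, z} with x inside
      exact dc_key f ezp.symm exy hpx h1 hpy.ne' h2.ne

lemma dc_spider (hC : ContainsSub spiderT1 G) : HasForbidden G f := by
  obtain ⟨g, hg, hadj⟩ := hC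
  have hne : ∀ i j : Fin 7, i ≠ j → f (g i) ≠ f (g j) :=
    fun i j h e => h (hg (f.injective e))
  have adj : ∀ i j : Fin 7, (s(i, j) ∈
      ({s(0, 1), s(0, 2), s(0, 3), s(1, 4), s(2, 5), s(3, 6)} : Set (Sym2 (Fin 7)))
      ∧ i ≠ j) → G.Adj (g i) (g j) := by
    intro i j h
    exact hadj i j (by rw [spiderT1, SimpleGraph.fromEdgeSet_adj]; exact h)
  have a01 : G.Adj (g 0) (g 1) := adj 0 1 ⟨by simp, by decide⟩
  have a02 : G.Adj (g 0) (g 2) := adj 0 2 ⟨by simp, by decide⟩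
  have a03 : G.Adj (g 0) (g 3) := adj 0 3 ⟨by simp, by decide⟩
  have a14 : G.Adj (g 1) (g 4) := adj 1 4 ⟨by simp, by decide⟩
  have a25 : G.Adj (g 2) (g 5) := adj 2 5 ⟨by simp, by decide⟩
  have a36 : G.Adj (g 3) (g 6) := adj 3 6 ⟨by simp, by decide⟩
  rcases dc_legpair f a14 a25 (hne 1 2 (by decide)) (hne 1 5 (by decide))
      (hne 4 2 (by decide)) (hne 4 5 (by decide)) with s12 | s21 | hF
  · rcases dc_legpair f a25 a36 (hne 2 3 (by decide)) (hne 2 6 (by decide))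
        (hne 5 3 (by decide)) (hne 5 6 (by decide)) with s23 | s32 | hF
    · -- 1 < 2 < 3, middle leg 2
      exact dc_spider_aux f a25 a02 a01 a03 s12.1 s12.2.1 s23.1 s23.2.2.1
        (hne 0 5 (by decide))
    · rcases dc_legpair f a14 a36 (hne 1 3 (by decide)) (hne 1 6 (by decide))
          (hne 4 3 (by decide)) (hne 4 6 (by decide)) with s13 | s31 | hF
      · -- 1 < 3 < 2, middle leg 3
        exact dc_spider_aux f a36 a03 a01 a02 s13.1 s13.2.1 s32.1 s32.2.2.1
          (hne 0 6 (by decide))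
      · -- 3 < 1 < 2, middle leg 1
        exact dc_spider_aux f a14 a01 a03 a02 s31.1 s31.2.1 s12.1 s12.2.2.1
          (hne 0 4 (by decide))
      · exact hF
    · exact hF
  · rcases dc_legpair f a25 a36 (hne 2 3 (by decide)) (hne 2 6 (by decide))
        (hne 5 3 (by decide)) (hne 5 6 (by decide)) with s23 | s32 | hF
    · rcases dc_legpair f a14 a36 (hne 1 3 (by decide)) (hne 1 6 (by decide))
          (hne 4 3 (by decide)) (hne 4 6 (by decide)) with s13 | s31 | hF
      · -- 2 < 1 < 3, middle leg 1
        exact dc_spider_aux f a14 a01 a02 a03 s21.1 s21.2.1 s13.1 s13.2.2.1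
          (hne 0 4 (by decide))
      · -- 2 < 3 < 1, middle leg 3
        exact dc_spider_aux f a36 a03 a02 a01 s23.1 s23.2.1 s31.1 s31.2.2.1
          (hne 0 6 (by decide))
      · exact hF
    · -- 3 < 2 < 1, middle leg 2
      exact dc_spider_aux f a25 a02 a03 a01 s32.1 s32.2.1 s21.1 s21.2.2.1
        (hne 0 5 (by decide))
    · exact hF
  · exact hF

lemma dc_net (hC : ContainsSub netT2 G) : HasForbidden G f := by
  obtain ⟨g, hg, hadj⟩ := hC
  have hne : ∀ i j : Fin 6, i ≠ j → f (g i) ≠ f (g j) :=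
    fun i j h e => h (hg (f.injective e))
  have adj : ∀ i j : Fin 6, (s(i, j) ∈
      ({s(0, 1), s(1, 2), s(0, 2), s(0, 3), s(1, 4), s(2, 5)} : Set (Sym2 (Fin 6)))
      ∧ i ≠ j) → G.Adj (g i) (g j) := by
    intro i j h
    exact hadj i j (by rw [netT2, SimpleGraph.fromEdgeSet_adj]; exact h)
  have a01 : G.Adj (g 0) (g 1) := adj 0 1 ⟨by simp, by decide⟩
  have a12 : G.Adj (g 1) (g 2) := adj 1 2 ⟨by simp, by decide⟩
  have a02 : G.Adj (g 0) (g 2) := adj 0 2 ⟨by simp, by decide⟩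
  have a03 : G.Adj (g 0) (g 3) := adj 0 3 ⟨by simp, by decide⟩
  have a14 : G.Adj (g 1) (g 4) := adj 1 4 ⟨by simp, by decide⟩
  have a25 : G.Adj (g 2) (g 5) := adj 2 5 ⟨by simp, by decide⟩
  rcases (hne 0 1 (by decide)).lt_or_gt with h01 | h10
  · rcases (hne 1 2 (by decide)).lt_or_gt with h12 | h21
    · -- 0 < 1 < 2, middle 1
      exact dc_key f a02 a14 h01 h12 (hne 4 0 (by decide)) (hne 4 2 (by decide))
    · rcases (hne 0 2 (by decide)).lt_or_gt with h02 | h20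
      · -- 0 < 2 < 1, middle 2
        exact dc_key f a01 a25 h02 h21 (hne 5 0 (by decide)) (hne 5 1 (by decide))
      · -- 2 < 0 < 1, middle 0
        exact dc_key f a12.symm a03 h20 h01 (hne 3 2 (by decide)) (hne 3 1 (by decide))
  · rcases (hne 1 2 (by decide)).lt_or_gt with h12 | h21
    · rcases (hne 0 2 (by decide)).lt_or_gt with h02 | h20
      · -- 1 < 0 < 2, middle 0
        exact dc_key f a12 a03 h10 h02 (hne 3 1 (by decide)) (hne 3 2 (by decide))
      · -- 1 < 2 < 0, middle 2
        exact dc_key f a01.symm a25 h12 h20 (hne 5 1 (by decide)) (hne 5 0 (by decide))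
    · -- 2 < 1 < 0, middle 1
      exact dc_key f a02.symm a14 h21 h10 (hne 4 2 (by decide)) (hne 4 0 (by decide))

open Fin.CommRing in
lemma dc_cycle {k : ℕ} (hk : 4 ≤ k) (hC : ContainsSub (SimpleGraph.cycleGraph k) G) :
    HasForbidden G f := by
  obtain ⟨m, rfl⟩ : ∃ m, k = m + 4 := ⟨k - 4, by omega⟩
  obtain ⟨g, hg, hadj⟩ := hC
  have hne : ∀ i j : Fin (m + 4), i ≠ j → f (g i) ≠ f (g j) :=
    fun i j h e => h (hg (f.injective e))
  have adj : ∀ i : Fin (m + 4), G.Adj (g i) (g (i + 1)) := by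
    intro i
    refine hadj i (i + 1) ?_
    rw [show m + 4 = (m + 2) + 2 from rfl] at *
    rw [SimpleGraph.cycleGraph_adj]
    right; ring
  -- nonzero small constants
  have c1 : (1 : Fin (m + 4)) ≠ 0 := by
    have h : ((1 : Fin (m + 4))).val = 1 % (m + 4) := rfl
    simp [Fin.ext_iff, h, Nat.mod_eq_of_lt (by omega : 1 < m + 4)]
  have c2 : (2 : Fin (m + 4)) ≠ 0 := by
    have h : ((2 : Fin (m + 4))).val = 2 % (m + 4) := rfl
    simp [Fin.ext_iff, h, Nat.mod_eq_of_lt (by omega : 2 < m + 4)]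
  have c3 : (3 : Fin (m + 4)) ≠ 0 := by
    have h : ((3 : Fin (m + 4))).val = 3 % (m + 4) := rfl
    simp [Fin.ext_iff, h, Nat.mod_eq_of_lt (by omega : 3 < m + 4)]
  obtain ⟨i, -, hmin⟩ := Finset.exists_min_image Finset.univ (fun j => f (g j))
    Finset.univ_nonempty
  have hlt : ∀ j : Fin (m + 4), j ≠ i → f (g i) < f (g j) :=
    fun j h => lt_of_le_of_ne (hmin j (Finset.mem_univ j)) (hne i j (Ne.symm h))
  have eprev : G.Adj (g i) (g (i - 1)) := by
    have h := adj (i - 1)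
    rw [show i - 1 + 1 = i by ring] at h
    exact h.symm
  have eprev2 : G.Adj (g (i - 1)) (g (i - 1 - 1)) := by
    have h := adj (i - 1 - 1)
    rw [show i - 1 - 1 + 1 = i - 1 by ring] at h
    exact h.symm
  rcases (hne (i + 1) (i - 1) (fun h => c2 (by linear_combination h))).lt_or_gt with
    hab | hba
  · -- f(g(i+1)) < f(g(i-1)) : edge {g i, g (i-1)} with g (i+1) inside
    exact dc_key f eprev (adj (i + 1))
      (hlt (i + 1) (fun h => c1 (by linear_combination h))) hab
      (hne (i + 1 + 1) i (fun h => c2 (by linear_combination h))).symm.symm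
      (hne (i + 1 + 1) (i - 1) (fun h => c3 (by linear_combination h)))
  · -- f(g(i-1)) < f(g(i+1)) : edge {g i, g (i+1)} with g (i-1) inside
    exact dc_key f (adj i) eprev2
      (hlt (i - 1) (fun h => c1 (by linear_combination -h))) hba
      (hne (i - 1 - 1) i (fun h => c2 (by linear_combination -h)))
      (hne (i - 1 - 1) (i + 1) (fun h => c3 (by linear_combination -h)))

end Aux

/-- if `G` contains a subgraph isomorphic to `T1`, to `T2`, or to a cycle
`C_k` with `k ≥ 4`, then every bijective labeling of `G` contains a forbidden
configuration `H1` or `H2`. -/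
theorem no_dcLabeling_of_contains {V : Type*} (G : SimpleGraph V)
    (h : ContainsSub spiderT1 G ∨ ContainsSub netT2 G ∨
      ∃ k : ℕ, 4 ≤ k ∧ ContainsSub (SimpleGraph.cycleGraph k) G) :
    ∀ (n : ℕ) (f : V ≃ Fin n), HasForbidden G f := by
  intro n f
  rcases h with h | h | ⟨k, hk, h⟩
  · exact dc_spider f h
  · exact dc_net f h
  · exact dc_cycle f hk h
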